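/- Yoshida's functor from the k-linearized span category of finite G-sets to finitely generated permutation kG-modules is a full and essentially surjective k-linear symmetric monoidal functor, where the monoidal structure on spans is induced by products of G-sets and on permutation modules by tensor product over k with diagonal G-action. -/

import Mathlib

/-!
Statement 15: Yoshida's functor — sending a finite `G`-set `X` to `k[X]` and a span
`X ←α− S −β→ Y` of `G`-maps to `x ↦ Σ_{s ∈ α⁻¹(x)} β(s)` — from the `k`-linearized span
category of finite `G`-sets to finitely generated permutation `kG`-modules, is a full and
essentially surjective `k`-linear symmetric monoidal functor, where the tensor product of
spans is induced by products of `G`-sets and the tensor product of permutation modules is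
`⊗_k` with diagonal `G`-action.

We express:
* fullness: every `G`-equivariant `k`-linear map `k[X] → k[Y]` is a `k`-linear combination
  of linearizations of spans of `G`-maps;
* essential surjectivity: every `kG`-module with a finite `G`-invariant basis is
  equivariantly isomorphic to some `k[X]`;
* monoidality: under the canonical isomorphisms `k[X] ⊗_k k[X'] ≅ k[X × X']`, the
  linearization of the product span is the tensor product of the linearizations.
-/

open Classical in
/-- The linearization `k[X] → k[Y]`, `x ↦ Σ_{s ∈ α⁻¹(x)} β(s)`, of a span `X ←α− S −β→ Y`. -/
noncomputable def spanMap (k : Type*) [CommRing k] {X Y S : Type*} [Fintype S]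
    (α : S → X) (β : S → Y) : (X →₀ k) →ₗ[k] (Y →₀ k) :=
  Finsupp.lift (Y →₀ k) k X fun x =>
    ∑ s : S, if α s = x then Finsupp.single (β s) (1 : k) else 0


open Classical in
lemma spanMap_single (k : Type*) [CommRing k] {X Y S : Type*} [Fintype S]
    (α : S → X) (β : S → Y) (x : X) (c : k) :
    spanMap k α β (Finsupp.single x c)
      = c • ∑ s : S, if α s = x then Finsupp.single (β s) (1:k) else 0 := by
  simp [spanMap, Finsupp.lift_apply, Finsupp.sum_single_index]

set_option maxHeartbeats 1000000 in
theorem yoshida_full_essSurj_monoidal (k : Type) [CommRing k]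
    (G : Type) [Group G] [Fintype G] :
    -- fullness
    (∀ (X Y : Type) [Fintype X] [Fintype Y] [MulAction G X] [MulAction G Y]
        (f : (X →₀ k) →ₗ[k] (Y →₀ k)),
        (∀ (g : G) (v : X →₀ k),
          f (Finsupp.lmapDomain k k (fun x : X => g • x) v) =
            Finsupp.lmapDomain k k (fun y : Y => g • y) (f v)) →
        f ∈ Submodule.span k
          {f' : (X →₀ k) →ₗ[k] (Y →₀ k) |
            ∃ (S : Type) (_ : Fintype S) (_ : MulAction G S) (α : S → X) (β : S → Y),
              (∀ (g : G) (s : S), α (g • s) = g • α s) ∧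
              (∀ (g : G) (s : S), β (g • s) = g • β s) ∧
              f' = spanMap k α β}) ∧
    -- essential surjectivity onto f.g. permutation `kG`-modules
    (∀ (V : Type) [AddCommGroup V] [Module k V] (ρ : Representation k G V)
        (ι : Type) (_ : Finite ι) (b : Module.Basis ι k V),
        (∀ (g : G) (i : ι), ∃ j : ι, ρ g (b i) = b j) →
        ∃ (X : Type) (_ : Fintype X) (_ : MulAction G X)
          (e : (X →₀ k) ≃ₗ[k] V),
          ∀ (g : G) (v : X →₀ k),
            e (Finsupp.lmapDomain k k (fun x : X => g • x) v) = ρ g (e v)) ∧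
    -- monoidality (with respect to `k[X] ⊗ k[X'] ≅ k[X × X']`)
    (∀ (X X' Y Y' S S' : Type) [Fintype S] [Fintype S']
        (α : S → X) (β : S → Y) (α' : S' → X') (β' : S' → Y'),
        (finsuppTensorFinsupp' k Y Y').toLinearMap.comp
            (TensorProduct.map (spanMap k α β) (spanMap k α' β')) =
          (spanMap k (fun p : S × S' => (α p.1, α' p.2))
              (fun p => (β p.1, β' p.2))).comp
            (finsuppTensorFinsupp' k X X').toLinearMap) := by
  refine ⟨?_, ?_, ?_⟩
  · intro X Y _ _ _ _ f hf
    classical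
    set a : X → Y → k := fun x y => f (Finsupp.single x 1) y with ha_def
    have ha : ∀ (g : G) (x : X) (y : Y), a (g • x) (g • y) = a x y := by
      intro g x y
      show f (Finsupp.single (g • x) 1) (g • y) = f (Finsupp.single x 1) y
      have := congrArg (fun v => v (g • y)) (hf g (Finsupp.single x 1))
      simp only [Finsupp.lmapDomain_apply, Finsupp.mapDomain_single] at this
      rw [this]
      exact Finsupp.mapDomain_apply (MulAction.injective g) _ _
    -- the quotient by orbits of the diagonal action on X × Y
    letI : MulAction G (X × Y) := Prod.mulAction
    letI : Setoid (X × Y) := MulAction.orbitRel G (X × Y)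
    set Q := Quotient (MulAction.orbitRel G (X × Y)) with hQ
    haveI : Fintype Q := Fintype.ofFinite Q
    -- for q : Q, the span given by the orbit of a representative
    have key : f = ∑ q : Q, a q.out.1 q.out.2 •
        spanMap k (fun s : MulAction.orbit G q.out => (s : X × Y).1)
          (fun s : MulAction.orbit G q.out => (s : X × Y).2) := by
      apply Finsupp.lhom_ext
      intro x c
      ext y
      -- LHS coefficient
      have hL : (f (Finsupp.single x c)) y = c * a x y := by
        rw [show (Finsupp.single x c) = c • Finsupp.single x (1:k) by simp, map_smul]
        simp [ha_def]
      rw [hL]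
      -- RHS coefficient
      rw [LinearMap.sum_apply, Finsupp.finset_sum_apply]
      have hterm : ∀ q : Q,
          ((a q.out.1 q.out.2 • spanMap k (fun s : MulAction.orbit G q.out => (s : X × Y).1)
            (fun s : MulAction.orbit G q.out => (s : X × Y).2)) (Finsupp.single x c)) y
          = if q = Quotient.mk _ (x, y) then c * a x y else 0 := by
        intro q
        rw [LinearMap.smul_apply, spanMap_single, smul_smul, Finsupp.smul_apply,
          Finsupp.finset_sum_apply]
        have : ∀ s : MulAction.orbit G q.out,
            ((if (s : X × Y).1 = x then Finsupp.single (s : X × Y).2 (1:k) else 0) y)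
            = if (s : X × Y) = (x, y) then 1 else 0 := by
          intro s
          by_cases h1 : (s : X × Y).1 = x <;>
            by_cases h2 : (s : X × Y).2 = y <;>
              simp [h1, h2, Finsupp.single_apply, Prod.ext_iff]
        rw [Finset.sum_congr rfl fun s _ => this s]
        by_cases hxy : (x, y) ∈ MulAction.orbit G q.out
        · have h1 : ∑ s : MulAction.orbit G q.out,
              (if (s : X × Y) = (x, y) then (1:k) else 0) = 1 := by
            have hcond : ∀ s : MulAction.orbit G q.out,
                ((s : X × Y) = (x, y)) ↔ (s = ⟨(x, y), hxy⟩) :=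
              fun s => ⟨fun h => Subtype.ext h, fun h => by rw [h]⟩
            rw [Finset.sum_congr rfl (fun s _ => if_congr (hcond s) rfl rfl)]
            simp
          have hq : q = Quotient.mk _ (x, y) := by
            obtain ⟨g, hg⟩ := hxy
            rw [← q.out_eq]
            apply Quotient.sound
            exact MulAction.orbitRel_apply.mpr ⟨g⁻¹, by rw [← hg]; exact inv_smul_smul g _⟩
          rw [h1, smul_eq_mul, mul_one, if_pos hq]
          obtain ⟨g, hg⟩ := hxy
          have hx : g • q.out.1 = x := congrArg Prod.fst hg
          have hy : g • q.out.2 = y := congrArg Prod.snd hg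
          rw [← hx, ← hy, ha, mul_comm]
        · have h0 : ∑ s : MulAction.orbit G q.out,
              (if (s : X × Y) = (x, y) then (1:k) else 0) = 0 := by
            apply Finset.sum_eq_zero
            intro s _
            rw [if_neg]
            intro h
            exact hxy (h ▸ s.2)
          rw [h0, smul_zero, if_neg]
          intro hq
          exact hxy (by
            rw [hq]
            exact MulAction.orbitRel_apply.mp (Setoid.symm (Quotient.mk_out (x, y))))
      simp only [hterm]
      rw [Finset.sum_ite_eq' Finset.univ (Quotient.mk _ (x, y) : Q) (fun _ => c * a x y),
        if_pos (Finset.mem_univ _)]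
    rw [key]
    apply Submodule.sum_mem
    intro q _
    apply Submodule.smul_mem
    apply Submodule.subset_span
    refine ⟨MulAction.orbit G q.out, inferInstance, inferInstance,
      (fun s => (s : X × Y).1), (fun s => (s : X × Y).2), ?_, ?_, rfl⟩
    · intro g s; rfl
    · intro g s; rfl
  · intro V _ _ ρ ι hfin b hb
    classical
    have : Fintype ι := Fintype.ofFinite ι
    rcases subsingleton_or_nontrivial k with hk | hk
    · have : Subsingleton V := Module.subsingleton k V
      refine ⟨ι, inferInstance, { smul := fun _ i => i, one_smul := fun _ => rfl, mul_smul := fun _ _ _ => rfl },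
        b.repr.symm, fun g v => Subsingleton.elim _ _⟩
    · -- nontrivial case
      have hbinj : Function.Injective b := b.injective
      let act : G → ι → ι := fun g i => Classical.choose (hb g i)
      have hact : ∀ g i, ρ g (b i) = b (act g i) := fun g i => Classical.choose_spec (hb g i)
      have hone : ∀ i, act 1 i = i := by
        intro i
        apply hbinj
        rw [← hact 1 i, map_one]
        rfl
      have hmul : ∀ g h i, act (g * h) i = act g (act h i) := by
        intro g h i
        apply hbinj
        rw [← hact, ← hact, ← hact, map_mul]
        rfl
      letI : SMul G ι := ⟨act⟩
      letI : MulAction G ι := { one_smul := hone, mul_smul := fun g h i => hmul g h i }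
      have hsmul : ∀ (g : G) (i : ι), g • i = act g i := fun _ _ => rfl
      refine ⟨ι, inferInstance, inferInstance, b.repr.symm, fun g v => ?_⟩
      have : (b.repr.symm.toLinearMap.comp
          (Finsupp.lmapDomain k k (fun x : ι => g • x))) =
          ((ρ g).comp b.repr.symm.toLinearMap) := by
        apply Finsupp.lhom_ext
        intro i c
        simp only [LinearMap.coe_comp, Function.comp_apply, LinearEquiv.coe_coe,
          Finsupp.lmapDomain_apply, Finsupp.mapDomain_single]
        rw [Module.Basis.repr_symm_apply, Module.Basis.repr_symm_apply, Finsupp.linearCombination_single,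
          Finsupp.linearCombination_single, hsmul, ← hact, map_smul]
      exact LinearMap.congr_fun this v
  · intro X X' Y Y' S S' _ _ α β α' β'
    ext x x' : 5
    simp only [TensorProduct.AlgebraTensorModule.curry_apply, TensorProduct.curry_apply,
      Finsupp.lsingle_apply, LinearMap.coe_comp, LinearMap.coe_restrictScalars,
      Function.comp_apply, TensorProduct.map_tmul, LinearEquiv.coe_coe,
      finsuppTensorFinsupp'_single_tmul_single, mul_one]
    rw [spanMap_single, spanMap_single, spanMap_single, one_smul, one_smul, one_smul,
      ← LinearEquiv.coe_coe]
    simp only [TensorProduct.sum_tmul, TensorProduct.tmul_sum, map_sum,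
      TensorProduct.ite_tmul, TensorProduct.tmul_ite]
    simp only [apply_ite, map_zero, map_sum, LinearEquiv.coe_coe,
      finsuppTensorFinsupp'_single_tmul_single, mul_one]
    rw [Fintype.sum_prod_type, Finset.sum_comm]
    refine Finset.sum_congr rfl fun s' _ => ?_
    by_cases h2 : α' s' = x'
    · simp only [h2, if_true]
      refine Finset.sum_congr rfl fun s _ => ?_
      by_cases h1 : α s = x <;> simp [h1, h2, Prod.ext_iff]
    · simp [h2, Prod.mk.injEq]
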